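/- Let ℓ ≥ 2 be even and let r be an integer with 0 ≤ r < ℓ. Then there exists a constant C > 0 such that for all n ≥ 1 with r ≡ n (mod 2), |c(n,r) − 2·a(n)/ℓ| ≤ C·n^{−3/2}·2^n; equivalently, along such n, c(n,r) = (2a(n)/ℓ)·(1 + O(1/n)). -/

import Mathlib

open Filter Real

/-- `aa n m` = number of length-`n` paths on `ℤ≥0` with steps `±1` starting at `0`
and ending at `m`. -/
def aa : ℕ → ℕ → ℕ
  | 0, m => if m = 0 then 1 else 0
  | n+1, m => aa n (m+1) + (if m = 0 then 0 else aa n (m-1))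

/-- `aSum n = Σ_{m=0}^n aa n m`. -/
def aSum (n : ℕ) : ℕ := ∑ m ∈ Finset.range (n+1), aa n m

/-- The modular variant `b(n,m)` depending on `ℓ`:
`b(n,m) = a(n,m)` if `m ≡ ℓ-1 (mod ℓ)`; otherwise `b(0,m) = δ_{m,0}`, and for `n ≥ 1`,
`b(n,m) = b(n-1,m-1) + b(n-1,m+1)` if `m % ℓ < ℓ-2` (negative-index terms are `0`),
and `b(n,m) = b(n-1,m-1)` if `m ≡ ℓ-2 (mod ℓ)`. -/
def bb (ℓ : ℕ) : ℕ → ℕ → ℕ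
  | 0, m => if m % ℓ = ℓ - 1 then aa 0 m else if m = 0 then 1 else 0
  | n+1, m =>
    if m % ℓ = ℓ - 1 then aa (n+1) m
    else if m % ℓ = ℓ - 2 then (if m = 0 then 0 else bb ℓ n (m-1))
    else (if m = 0 then 0 else bb ℓ n (m-1)) + bb ℓ n (m+1)

/-- `bSum ℓ n = Σ_{m=0}^n bb ℓ n m`. -/
def bSum (ℓ : ℕ) (n : ℕ) : ℕ := ∑ m ∈ Finset.range (n+1), bb ℓ n m

/-- `cc ℓ n r = Σ_{m ≥ 0, m ≡ r (mod ℓ)} aa n m` (finite since `aa n m = 0` for `m > n`). -/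
def cc (ℓ : ℕ) (n r : ℕ) : ℕ :=
  ∑ m ∈ Finset.range (n+1), if m % ℓ = r then aa n m else 0

/-- `ww ℓ n = Σ_{0 ≤ m ≤ n, m ≡ ℓ-1 (mod ℓ)} bb ℓ n m`. -/
def ww (ℓ : ℕ) (n : ℕ) : ℕ :=
  ∑ m ∈ Finset.range (n+1), if m % ℓ = ℓ - 1 then bb ℓ n m else 0

set_option maxHeartbeats 1000000
open Finset

/-- `H n k = C(n,k) - C(n,k+1)` as an integer. -/
def Hk (n k : ℕ) : ℤ := (n.choose k : ℤ) - n.choose (k+1)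

lemma aa_formula : ∀ n m : ℕ, (aa n m : ℤ) = if (n + m) % 2 = 0 then Hk n ((n+m)/2) else 0 := by
  intro n
  induction n with
  | zero =>
    intro m
    rcases Nat.eq_zero_or_pos m with rfl | hpos
    · simp [aa, Hk]
    rcases Nat.even_or_odd m with ⟨t, ht⟩ | ⟨t, ht⟩
    · have h1 : (0 + m) % 2 = 0 := by omega
      have h2 : (0 + m)/2 = t := by omega
      have ht1 : 1 ≤ t := by omega
      rw [h1, h2]
      simp only [if_pos rfl]
      have : aa 0 m = 0 := by simp [aa]; omega
      rw [this, Hk, Nat.choose_eq_zero_of_lt (by omega), Nat.choose_eq_zero_of_lt (by omega)]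
      simp
    · have h1 : (0 + m) % 2 = 1 := by omega
      rw [h1]
      have : aa 0 m = 0 := by simp [aa]; omega
      simp [this]
  | succ n ih =>
    intro m
    rcases Nat.eq_zero_or_pos m with rfl | hpos
    · -- m = 0
      show ((aa n 1 : ℕ) : ℤ) + (0:ℕ) = _
      rcases Nat.even_or_odd n with ⟨t, ht⟩ | ⟨t, ht⟩
      · -- n even: n+1+0 odd, RHS = 0; LHS: aa n 1 has (n+1)%2 = 1 → 0
        have h1 : (n + 1 + 0) % 2 = 1 := by omega
        have h2 : (n + 1) % 2 = 1 := by omega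
        rw [ih 1, h2]; simp
      · -- n odd, n = 2t+1... ht : n = 2t+1
        have h1 : (n + 1 + 0) % 2 = 0 := by omega
        have h2 : (n + 1) % 2 = 0 := by omega
        have h3 : (n + 1) / 2 = t + 1 := by omega
        have h4 : (n + 1 + 0) / 2 = t + 1 := by omega
        rw [ih 1, h2, h3]
        have h4 : (n + 1 + 0) / 2 = t + 1 := by omega
        simp only [h1, h4, if_pos rfl, reduceIte]
        have hsym : (n+1).choose (t+1) - (n+1).choose (t+2) = (n.choose (t+1) : ℤ) - n.choose (t+2) := by
          have p1 : (n+1).choose (t+1) = n.choose t + n.choose (t+1) := Nat.choose_succ_succ n t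
          have p2 : (n+1).choose (t+2) = n.choose (t+1) + n.choose (t+2) := Nat.choose_succ_succ n (t+1)
          have hhalf : n.choose t = n.choose (t+1) := by
            have : n = 2*t+1 := by omega
            subst this
            exact (Nat.choose_symm_half t).symm
          push_cast [p1, p2, hhalf]
          ring
        simp only [Hk]
        push_cast
        push_cast at hsym
        linarith [hsym]
    · -- m ≥ 1
      show ((aa n (m+1) : ℕ) : ℤ) + ((if m = 0 then 0 else aa n (m-1) : ℕ) : ℤ) = _
      rw [if_neg (by omega)]
      rcases Nat.even_or_odd (n + m) with ⟨t, ht⟩ | ⟨t, ht⟩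
      · -- n+m even ⇒ n+1+m odd : everything vanishes
        have h1 : (n + 1 + m) % 2 = 1 := by omega
        have h2 : (n + (m+1)) % 2 = 1 := by omega
        have h3 : (n + (m-1)) % 2 = 1 := by omega
        rw [ih (m+1), ih (m-1), h1, h2, h3]; simp
      · -- n+m odd; K := (n+1+m)/2
        have h1 : (n + 1 + m) % 2 = 0 := by omega
        have h2 : (n + (m+1)) % 2 = 0 := by omega
        have h3 : (n + (m-1)) % 2 = 0 := by omega
        obtain ⟨K, hK⟩ : ∃ K, K = (n + 1 + m) / 2 := ⟨_, rfl⟩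
        have hK1 : 1 ≤ K := by omega
        have h4 : (n + (m+1)) / 2 = K := by omega
        have h5 : (n + (m-1)) / 2 = K - 1 := by omega
        rw [ih (m+1), ih (m-1), h1, h2, h3, h4, h5]
        simp only [if_pos rfl, Hk]
        obtain ⟨K', rfl⟩ : ∃ K', K = K' + 1 := ⟨K - 1, by omega⟩
        have p1 : (n+1).choose (K'+1) = n.choose K' + n.choose (K'+1) := Nat.choose_succ_succ n K'
        have p2 : (n+1).choose (K'+2) = n.choose (K'+1) + n.choose (K'+2) := Nat.choose_succ_succ n (K'+1)
        simp only [Nat.add_sub_cancel]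
        rw [← hK]
        push_cast [p1, p2]
        ring

lemma Hk_eq_zero (n k : ℕ) (h : n < k) : Hk n k = 0 := by
  rw [Hk, Nat.choose_eq_zero_of_lt h, Nat.choose_eq_zero_of_lt (by omega)]
  simp

lemma aa_eq_zero_of_odd (n m : ℕ) (h : (n + m) % 2 = 1) : aa n m = 0 := by
  have := aa_formula n m
  rw [if_neg (by omega)] at this
  exact_mod_cast this

lemma aa_eq_zero_of_lt (n m : ℕ) (h : n < m) : aa n m = 0 := by
  have := aa_formula n m
  by_cases hp : (n + m) % 2 = 0
  · rw [if_pos hp, Hk_eq_zero n _ (by omega)] at this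
    exact_mod_cast this
  · rw [if_neg hp] at this; exact_mod_cast this

lemma aSum_le (n : ℕ) : aSum n ≤ 2 ^ n := by
  induction n with
  | zero => simp [aSum, aa]
  | succ n ih =>
    have key : aSum (n+1) ≤ 2 * aSum n := by
      have e1 : aSum (n+1) = (∑ m ∈ Finset.range (n+2), aa n (m+1))
          + ∑ m ∈ Finset.range (n+2), (if m = 0 then 0 else aa n (m-1)) := by
        rw [aSum, ← Finset.sum_add_distrib]
        rfl
      have b1 : ∑ m ∈ Finset.range (n+2), aa n (m+1) ≤ aSum n := by
        have h3 : ∑ i ∈ Finset.range (n+3), aa n i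
            = (∑ m ∈ Finset.range (n+2), aa n (m+1)) + aa n 0 := Finset.sum_range_succ' (aa n) (n+2)
        have h4 : ∑ i ∈ Finset.range (n+3), aa n i = aSum n := by
          rw [show n+3 = (n+1)+1+1 by ring, Finset.sum_range_succ, Finset.sum_range_succ,
            aa_eq_zero_of_lt n (n+1) (by omega), aa_eq_zero_of_lt n (n+2) (by omega)]
          rfl
        omega
      have b2 : ∑ m ∈ Finset.range (n+2), (if m = 0 then 0 else aa n (m-1)) = aSum n := by
        have h3 := Finset.sum_range_succ' (fun m => if m = 0 then 0 else aa n (m-1)) (n+1)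
        simp at h3; exact h3
      omega
    calc aSum (n+1) ≤ 2 * aSum n := key
    _ ≤ 2 * 2^n := by omega
    _ = 2^(n+1) := by ring

lemma cc_le (ℓ n r : ℕ) : cc ℓ n r ≤ aSum n := by
  apply Finset.sum_le_sum
  intro i _
  split <;> simp

/-- Reindexing: `cc` as a sum of `Hk` along an arithmetic progression. -/
lemma cc_eq (d n r : ℕ) (hd : 1 ≤ d) (hr : r < 2*d) (hpar : (n + r) % 2 = 0) :
    (cc (2*d) n r : ℤ) = ∑ j ∈ Finset.range (n+1), Hk n ((n+r)/2 + j*d) := by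
  rw [cc]
  push_cast
  have step1 : ∑ m ∈ Finset.range (n+1), (if m % (2*d) = r then (aa n m : ℤ) else 0)
      = ∑ j ∈ Finset.range (n+1), (if r + j*(2*d) ≤ n then (aa n (r + j*(2*d)) : ℤ) else 0) := by
    rw [← Finset.sum_filter, ← Finset.sum_filter]
    apply Finset.sum_nbij' (fun m => m / (2*d)) (fun j => r + j * (2*d))
    · intro m hm
      simp only [Finset.mem_filter, Finset.mem_range] at hm ⊢
      obtain ⟨hm1, hm2⟩ := hm
      constructor
      · have : m / (2*d) ≤ m := Nat.div_le_self _ _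
        omega
      · have := Nat.div_add_mod m (2*d)
        have hcomm : (2*d)*(m/(2*d)) = (m/(2*d))*(2*d) := by ring
        omega
    · intro j hj
      simp only [Finset.mem_filter, Finset.mem_range] at hj ⊢
      obtain ⟨hj1, hj2⟩ := hj
      constructor
      · omega
      · rw [Nat.add_mul_mod_self_right, Nat.mod_eq_of_lt hr]
    · intro m hm
      simp only [Finset.mem_filter, Finset.mem_range] at hm
      have := Nat.div_add_mod m (2*d)
      have hcomm : (2*d)*(m/(2*d)) = (m/(2*d))*(2*d) := by ring
      omega
    · intro j hj
      simp only [Finset.mem_filter, Finset.mem_range] at hj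
      rw [Nat.add_mul_div_right _ _ (by omega : 0 < 2*d), Nat.div_eq_of_lt hr]
      omega
    · intro m hm
      simp only [Finset.mem_filter, Finset.mem_range] at hm
      have := Nat.div_add_mod m (2*d)
      have hcomm : (2*d)*(m/(2*d)) = (m/(2*d))*(2*d) := by ring
      have harg : r + m/(2*d)*(2*d) = m := by omega
      rw [harg]
  rw [step1]
  apply Finset.sum_congr rfl
  intro j _
  have hjd : j*(2*d) = 2*(j*d) := by ring
  by_cases hle : r + j*(2*d) ≤ n
  · rw [if_pos hle, aa_formula]
    have hp2 : (n + (r + j*(2*d))) % 2 = 0 := by omega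
    rw [if_pos hp2]
    congr 1
    omega
  · rw [if_neg hle, Hk_eq_zero]
    omega

/-- Partition of `aSum` into the `d` residue classes of correct parity. -/
lemma sum_cc (d n : ℕ) (hd : 1 ≤ d) :
    ∑ i ∈ Finset.range d, cc (2*d) n (n % 2 + 2*i) = aSum n := by
  rw [aSum]
  unfold cc
  rw [Finset.sum_comm]
  apply Finset.sum_congr rfl
  intro m _
  by_cases hpar : (n + m) % 2 = 0
  · have hmod2 : m % (2*d) % 2 = m % 2 := Nat.mod_mod_of_dvd m ⟨d, rfl⟩
    have hmodlt : m % (2*d) < 2*d := Nat.mod_lt _ (by omega)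
    have hi0 : ∃ i0, i0 < d ∧ m % (2*d) = n % 2 + 2*i0 := by
      refine ⟨(m % (2*d) - n % 2)/2, by omega, by omega⟩
    obtain ⟨i0, hi0lt, hi0eq⟩ := hi0
    have : ∀ i ∈ Finset.range d, (if m % (2*d) = n % 2 + 2*i then aa n m else 0)
        = if i = i0 then aa n m else 0 := by
      intro i _
      congr 1
      exact propext (by omega)
    rw [Finset.sum_congr rfl this, Finset.sum_ite_eq' (Finset.range d) i0 (fun _ => aa n m),
      if_pos (Finset.mem_range.mpr hi0lt)]
  · rw [aa_eq_zero_of_odd n m (by omega)]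
    simp

/-- Sum over blocks. -/
lemma sum_blocks (f : ℕ → ℤ) (J d : ℕ) :
    ∑ k ∈ Finset.range (J*d), f k = ∑ j ∈ Finset.range J, ∑ s ∈ Finset.range d, f (j*d+s) := by
  induction J with
  | zero => simp
  | succ J ih =>
    rw [Finset.sum_range_succ, ← ih, show (J+1)*d = J*d + d by ring, Finset.sum_range_add]

lemma abs_diff_le (G : ℕ → ℤ) (x s : ℕ) :
    |G x - G (x+s)| ≤ ∑ i ∈ Finset.range s, |G (x+i) - G (x+i+1)| := by
  induction s with
  | zero => simp
  | succ s ih =>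
    rw [Finset.sum_range_succ]
    calc |G x - G (x+(s+1))| ≤ |G x - G (x+s)| + |G (x+s) - G (x+s+1)| := by
          rw [show x+(s+1) = x+s+1 by ring]
          exact (abs_sub_le _ _ _)
    _ ≤ _ := by exact add_le_add_left ih _

/-- Sampling discrepancy bound. -/
lemma sample_bound (G : ℕ → ℤ) (a d J : ℕ) (hd : 1 ≤ d) :
    |∑ j ∈ Finset.range J, G (a + j*d)|
      ≤ |∑ k ∈ Finset.range (J*d), G (a+k)| + ∑ k ∈ Finset.range (J*d), |G (a+k) - G (a+k+1)| := by
  have blocks := sum_blocks (fun k => G (a+k)) J d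
  have blocks2 := sum_blocks (fun k => |G (a+k) - G (a+k+1)|) J d
  have key : (d:ℤ) * (∑ j ∈ Finset.range J, G (a + j*d)) - ∑ k ∈ Finset.range (J*d), G (a+k)
      = ∑ j ∈ Finset.range J, ∑ s ∈ Finset.range d, (G (a + j*d) - G (a + j*d + s)) := by
    rw [blocks, Finset.mul_sum, ← Finset.sum_sub_distrib]
    apply Finset.sum_congr rfl
    intro j _
    rw [Finset.sum_sub_distrib, Finset.sum_const, Finset.card_range]
    simp only [nsmul_eq_mul]
    congr 1
    apply Finset.sum_congr rfl
    intro s _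
    congr 1
    omega
  have hb : |∑ j ∈ Finset.range J, ∑ s ∈ Finset.range d, (G (a + j*d) - G (a + j*d + s))|
      ≤ (d:ℤ) * ∑ k ∈ Finset.range (J*d), |G (a+k) - G (a+k+1)| := by
    calc |∑ j ∈ Finset.range J, ∑ s ∈ Finset.range d, (G (a + j*d) - G (a + j*d + s))|
        ≤ ∑ j ∈ Finset.range J, |∑ s ∈ Finset.range d, (G (a + j*d) - G (a + j*d + s))| :=
          Finset.abs_sum_le_sum_abs _ _
      _ ≤ ∑ j ∈ Finset.range J, ∑ s ∈ Finset.range d, |G (a + j*d) - G (a + j*d + s)| :=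
          Finset.sum_le_sum (fun j _ => Finset.abs_sum_le_sum_abs _ _)
      _ ≤ ∑ j ∈ Finset.range J, ∑ s ∈ Finset.range d,
            (∑ i ∈ Finset.range d, |G (a + j*d + i) - G (a + j*d + i + 1)|) := by
          apply Finset.sum_le_sum; intro j _
          apply Finset.sum_le_sum; intro s hs
          calc |G (a + j*d) - G (a + j*d + s)| ≤ ∑ i ∈ Finset.range s, |G (a+j*d+i) - G (a+j*d+i+1)| :=
                abs_diff_le G (a+j*d) s
          _ ≤ _ := Finset.sum_le_sum_of_subset_of_nonneg
                (Finset.range_subset_range.mpr (le_of_lt (Finset.mem_range.mp hs))) (by intros; positivity)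
      _ = (d:ℤ) * ∑ k ∈ Finset.range (J*d), |G (a+k) - G (a+k+1)| := by
          rw [blocks2, Finset.mul_sum]
          apply Finset.sum_congr rfl
          intro j _
          rw [Finset.sum_const, Finset.card_range, nsmul_eq_mul]
          congr 1
          apply Finset.sum_congr rfl
          intro i _
          rw [show a+j*d+i = a+(j*d+i) by ring]
  have habs : (d:ℤ) * |∑ j ∈ Finset.range J, G (a + j*d)|
      ≤ |∑ k ∈ Finset.range (J*d), G (a+k)| + (d:ℤ) * ∑ k ∈ Finset.range (J*d), |G (a+k) - G (a+k+1)| := by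
    have h1 : |(d:ℤ) * ∑ j ∈ Finset.range J, G (a + j*d)|
        ≤ |∑ k ∈ Finset.range (J*d), G (a+k)| + (d:ℤ) * ∑ k ∈ Finset.range (J*d), |G (a+k) - G (a+k+1)| := by
      calc |(d:ℤ) * ∑ j ∈ Finset.range J, G (a + j*d)|
          ≤ |∑ k ∈ Finset.range (J*d), G (a+k)| +
            |(d:ℤ) * (∑ j ∈ Finset.range J, G (a + j*d)) - ∑ k ∈ Finset.range (J*d), G (a+k)| := by
            have := abs_sub_le ((d:ℤ) * ∑ j ∈ Finset.range J, G (a + j*d))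
              (∑ k ∈ Finset.range (J*d), G (a+k)) 0
            simp only [sub_zero, abs_zero] at this ⊢
            calc |(d:ℤ) * ∑ j ∈ Finset.range J, G (a + j*d)| ≤ _ := this
            _ = _ := by rw [abs_sub_comm]; ring
      _ ≤ _ := by rw [key]; exact add_le_add_right hb _
    rw [abs_mul, abs_of_nonneg (by positivity : (0:ℤ) ≤ (d:ℤ))] at h1
    exact h1
  have hd' : (0:ℤ) < d := by exact_mod_cast hd
  have hfirst : |∑ k ∈ Finset.range (J*d), G (a+k)| ≤ (d:ℤ) * |∑ k ∈ Finset.range (J*d), G (a+k)| := by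
    nlinarith [abs_nonneg (∑ k ∈ Finset.range (J*d), G (a+k))]
  have := le_of_mul_le_mul_left (a := (d:ℤ)) (by linarith [habs, hfirst] :
    (d:ℤ) * |∑ j ∈ Finset.range J, G (a + j*d)| ≤ (d:ℤ) * (|∑ k ∈ Finset.range (J*d), G (a+k)| + ∑ k ∈ Finset.range (J*d), |G (a+k) - G (a+k+1)|)) hd'
  exact this

def Gk (n k : ℕ) : ℤ := Hk n k - Hk n (k+1)
def Dk (n k : ℕ) : ℤ := Gk n k - Gk n (k+1)

lemma G_telescope (n a K : ℕ) :
    ∑ k ∈ Finset.range K, Gk n (a+k) = Hk n a - Hk n (a+K) := by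
  have := Finset.sum_range_sub' (fun k => Hk n (a+k)) K
  simpa [Gk, add_assoc] using this

lemma centralBinom_sq_le (m : ℕ) : (Nat.centralBinom m)^2 * (2*m+1) ≤ 16^m := by
  induction m with
  | zero => simp [Nat.centralBinom]
  | succ m ih =>
    have hrec := Nat.succ_mul_centralBinom_succ m
    have key : (Nat.centralBinom (m+1))^2 * (2*(m+1)+1) * (m+1)^2
        = 4*(2*m+1)*(2*(m+1)+1) * ((Nat.centralBinom m)^2 * (2*m+1)) := by
      have : ((m+1) * Nat.centralBinom (m+1))^2 = (2 * (2*m+1) * Nat.centralBinom m)^2 := by rw [hrec]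
      nlinarith [this]
    have h2 : 4*(2*m+1)*(2*(m+1)+1) * ((Nat.centralBinom m)^2 * (2*m+1)) ≤ 16*(m+1)^2 * 16^m := by
      calc 4*(2*m+1)*(2*(m+1)+1) * ((Nat.centralBinom m)^2 * (2*m+1))
          ≤ 4*(2*m+1)*(2*(m+1)+1) * 16^m := Nat.mul_le_mul_left _ ih
        _ ≤ 16*(m+1)^2 * 16^m := by nlinarith
    have h3 : (Nat.centralBinom (m+1))^2 * (2*(m+1)+1) * (m+1)^2 ≤ 16^(m+1) * (m+1)^2 := by
      rw [key]
      calc _ ≤ 16*(m+1)^2 * 16^m := h2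
        _ = 16^(m+1) * (m+1)^2 := by ring
    exact Nat.le_of_mul_le_mul_right h3 (by positivity)

lemma choose_sq_le (n k : ℕ) : n * (n.choose k)^2 ≤ 4^n := by
  have hmid := Nat.choose_le_middle k n
  rcases Nat.even_or_odd n with ⟨m, hm⟩ | ⟨m, hm⟩
  · subst hm
    have h2 : (m+m)/2 = m := by omega
    rw [h2] at hmid
    have hmb : (m+m).choose k ≤ Nat.centralBinom m := by
      rwa [Nat.centralBinom, show 2*m = m+m by ring]
    calc (m+m) * ((m+m).choose k)^2 ≤ (m+m) * (Nat.centralBinom m)^2 :=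
          Nat.mul_le_mul_left _ (Nat.pow_le_pow_left hmb 2)
      _ ≤ (Nat.centralBinom m)^2 * (2*m+1) := by nlinarith
      _ ≤ 16^m := centralBinom_sq_le m
      _ ≤ 4^(m+m) := le_of_eq (by rw [show (16:ℕ) = 4^2 by norm_num, ← pow_mul, two_mul])
  · subst hm
    have h2 : (2*m+1)/2 = m := by omega
    rw [h2] at hmid
    have hC : (2*m+1).choose m ≤ 2 * Nat.centralBinom m := by
      rcases Nat.eq_zero_or_pos m with rfl | hpos
      · simp [Nat.centralBinom]
      obtain ⟨M, rfl⟩ : ∃ M, m = M + 1 := ⟨m - 1, by omega⟩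
      have p1 : (2*(M+1)+1).choose (M+1) = (2*(M+1)).choose M + (2*(M+1)).choose (M+1) := by
        rw [show 2*(M+1)+1 = (2*(M+1)) + 1 by ring]
        exact Nat.choose_succ_succ (2*(M+1)) M
      have p2 : (2*(M+1)).choose M ≤ (2*(M+1)).choose ((2*(M+1))/2) := Nat.choose_le_middle M (2*(M+1))
      have p3 : (2*(M+1))/2 = M+1 := by omega
      rw [p3] at p2
      rw [Nat.centralBinom, p1]
      omega
    have hck : (2*m+1).choose k ≤ 2 * Nat.centralBinom m := le_trans hmid hC
    calc (2*m+1) * ((2*m+1).choose k)^2 ≤ (2*m+1) * (2*Nat.centralBinom m)^2 :=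
          Nat.mul_le_mul_left _ (Nat.pow_le_pow_left hck 2)
      _ = 4 * ((Nat.centralBinom m)^2 * (2*m+1)) := by ring
      _ ≤ 4 * 16^m := by have := centralBinom_sq_le m; omega
      _ ≤ 4^(2*m+1) := le_of_eq (by rw [show (16:ℕ) = 4^2 by norm_num, ← pow_mul, pow_succ]; ring)

lemma choose_le_real (n k : ℕ) (hn : 1 ≤ n) : (n.choose k : ℝ) ≤ 2^n / Real.sqrt n := by
  have h0 : (0:ℝ) < Real.sqrt n := Real.sqrt_pos.mpr (by exact_mod_cast hn)
  rw [le_div_iff₀ h0]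
  have hsq : ((n.choose k : ℝ) * Real.sqrt n)^2 ≤ ((2:ℝ)^n)^2 := by
    have h1 : (n : ℝ) * (n.choose k : ℝ)^2 ≤ (4:ℝ)^n := by
      have := choose_sq_le n k
      calc (n : ℝ) * (n.choose k : ℝ)^2 = ((n * (n.choose k)^2 : ℕ) : ℝ) := by push_cast; ring
        _ ≤ ((4^n : ℕ) : ℝ) := by exact_mod_cast this
        _ = (4:ℝ)^n := by push_cast; ring
    have h2 : Real.sqrt n ^ 2 = n := Real.sq_sqrt (by positivity)
    calc ((n.choose k : ℝ) * Real.sqrt n)^2 = (n.choose k : ℝ)^2 * (Real.sqrt n^2) := by ring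
      _ = (n:ℝ) * (n.choose k : ℝ)^2 := by rw [h2]; ring
      _ ≤ (4:ℝ)^n := h1
      _ = ((2:ℝ)^n)^2 := by rw [← pow_mul, show (4:ℝ) = 2^2 by norm_num, ← pow_mul]; ring_nf
  have ha : (0:ℝ) ≤ (n.choose k : ℝ) * Real.sqrt n := by positivity
  have hb : (0:ℝ) ≤ (2:ℝ)^n := by positivity
  nlinarith [hsq, ha, hb]

lemma choose_anti (n k : ℕ) (h : n ≤ 2*k) : n.choose (k+1) ≤ n.choose k := by
  have hid := Nat.choose_succ_right_eq n k
  by_cases hk : k ≤ n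
  · have h1 : n.choose (k+1) * (k+1) ≤ n.choose k * (k+1) := by
      rw [hid]
      have : n - k ≤ k+1 := by omega
      exact Nat.mul_le_mul_left _ this
    exact Nat.le_of_mul_le_mul_right h1 (by omega)
  · rw [Nat.choose_eq_zero_of_lt (by omega)]
    omega

lemma choose_anti_add (n k : ℕ) (h : n ≤ 2*k) : ∀ i, n.choose (k+i) ≤ n.choose k := by
  intro i
  induction i with
  | zero => exact le_refl _
  | succ i ih =>
    calc n.choose (k+(i+1)) = n.choose ((k+i)+1) := by ring_nf
      _ ≤ n.choose (k+i) := choose_anti n (k+i) (by omega)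
      _ ≤ n.choose k := ih

lemma choose_succ_real (n k : ℕ) (h : k < n) :
    ((k:ℝ)+1) * (n.choose (k+1) : ℝ) = ((n:ℝ) - k) * (n.choose k : ℝ) := by
  have hnat := Nat.choose_succ_right_eq n k
  calc ((k:ℝ)+1) * (n.choose (k+1) : ℝ) = ((n.choose (k+1) * (k+1) : ℕ) : ℝ) := by push_cast; ring
    _ = ((n.choose k * (n-k) : ℕ) : ℝ) := by exact_mod_cast congrArg (fun x : ℕ => (x:ℝ)) hnat
    _ = ((n:ℝ) - k) * (n.choose k : ℝ) := by push_cast [Nat.cast_sub (le_of_lt h)]; ring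

lemma choose_decay (n k : ℕ) (hn : 1 ≤ n) (hk : n ≤ 2*k) :
    ∀ j, (n.choose (k+j) : ℝ) * Real.exp ((j:ℝ)^2/(2*n)) ≤ n.choose k := by
  intro j
  induction j with
  | zero => simp
  | succ j ih =>
    by_cases hj : k+j+1 ≤ n
    case neg =>
      rw [show k+(j+1) = k+j+1 by ring, Nat.choose_eq_zero_of_lt (by omega)]
      simp [Real.exp_nonneg]
    case pos =>
      have hpos : (0:ℝ) < (k:ℝ)+(j:ℝ)+1 := by positivity
      have hklen : ((n:ℝ)) ≤ 2*(k:ℝ) := by exact_mod_cast hk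
      have hkj2n : ((k:ℝ)+(j:ℝ)+1) ≤ 2*(n:ℝ) := by
        have h1 : k + j + 1 ≤ 2*n := by omega
        exact_mod_cast h1
      have hid := choose_succ_real n (k+j) (by omega)
      push_cast at hid
      have hCnn : (0:ℝ) ≤ (n.choose (k+j) : ℝ) := by positivity
      have hstep : (n.choose (k+j+1) : ℝ) ≤ (n.choose (k+j) : ℝ) * Real.exp (-(2*(j:ℝ)+1)/(2*(n:ℝ))) := by
        have hle : ((n:ℝ) - ((k:ℝ)+(j:ℝ))) ≤ ((k:ℝ)+(j:ℝ)+1) * (1 - (2*(j:ℝ)+1)/((k:ℝ)+(j:ℝ)+1)) := by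
          rw [mul_sub, mul_one, mul_div_cancel₀ _ (ne_of_gt hpos)]
          linarith
        have hexp1 : 1 - (2*(j:ℝ)+1)/((k:ℝ)+(j:ℝ)+1) ≤ Real.exp (-((2*(j:ℝ)+1)/((k:ℝ)+(j:ℝ)+1))) := by
          have := Real.add_one_le_exp (-((2*(j:ℝ)+1)/((k:ℝ)+(j:ℝ)+1)))
          linarith
        have hexp2 : Real.exp (-((2*(j:ℝ)+1)/((k:ℝ)+(j:ℝ)+1))) ≤ Real.exp (-(2*(j:ℝ)+1)/(2*(n:ℝ))) := by
          rw [Real.exp_le_exp, neg_div, neg_le_neg_iff]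
          exact div_le_div_of_nonneg_left (by positivity) hpos hkj2n
        have hmul : ((k:ℝ)+(j:ℝ)+1) * (n.choose (k+j+1) : ℝ)
            ≤ ((k:ℝ)+(j:ℝ)+1) * ((n.choose (k+j) : ℝ) * Real.exp (-(2*(j:ℝ)+1)/(2*(n:ℝ)))) := by
          rw [hid]
          have hchain : ((n:ℝ) - ((k:ℝ)+(j:ℝ))) ≤ ((k:ℝ)+(j:ℝ)+1) * Real.exp (-(2*(j:ℝ)+1)/(2*(n:ℝ))) := by
            calc ((n:ℝ) - ((k:ℝ)+(j:ℝ))) ≤ ((k:ℝ)+(j:ℝ)+1) * (1 - (2*(j:ℝ)+1)/((k:ℝ)+(j:ℝ)+1)) := hle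
              _ ≤ ((k:ℝ)+(j:ℝ)+1) * Real.exp (-((2*(j:ℝ)+1)/((k:ℝ)+(j:ℝ)+1))) :=
                  mul_le_mul_of_nonneg_left hexp1 (le_of_lt hpos)
              _ ≤ ((k:ℝ)+(j:ℝ)+1) * Real.exp (-(2*(j:ℝ)+1)/(2*(n:ℝ))) :=
                  mul_le_mul_of_nonneg_left hexp2 (le_of_lt hpos)
          nlinarith [hCnn]
        exact le_of_mul_le_mul_left hmul hpos
      have hcomb : (n.choose (k+(j+1)) : ℝ) * Real.exp (((j:ℝ)+1)^2/(2*(n:ℝ)))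
          ≤ (n.choose (k+j) : ℝ) * Real.exp ((j:ℝ)^2/(2*(n:ℝ))) := by
        rw [show k+(j+1) = k+j+1 by ring]
        calc (n.choose (k+j+1) : ℝ) * Real.exp (((j:ℝ)+1)^2/(2*(n:ℝ)))
            ≤ ((n.choose (k+j) : ℝ) * Real.exp (-(2*(j:ℝ)+1)/(2*(n:ℝ)))) * Real.exp (((j:ℝ)+1)^2/(2*(n:ℝ))) :=
              mul_le_mul_of_nonneg_right hstep (Real.exp_nonneg _)
          _ = (n.choose (k+j) : ℝ) * Real.exp ((j:ℝ)^2/(2*(n:ℝ))) := by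
              rw [mul_assoc, ← Real.exp_add]
              congr 2
              have hne : (2*(n:ℝ)) ≠ 0 := by positivity
              field_simp
              ring
      calc (n.choose (k+(j+1)) : ℝ) * Real.exp (((j+1:ℕ):ℝ)^2/(2*(n:ℝ)))
          = (n.choose (k+(j+1)) : ℝ) * Real.exp (((j:ℝ)+1)^2/(2*(n:ℝ))) := by push_cast; ring_nf
        _ ≤ (n.choose (k+j) : ℝ) * Real.exp ((j:ℝ)^2/(2*(n:ℝ))) := hcomb
        _ ≤ n.choose k := ih

lemma exp_neg_le (x : ℝ) (hx : 0 < x) : Real.exp (-x) ≤ 27 / x^3 := by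
  have h1 : x/3 ≤ Real.exp (x/3) := by
    have := Real.add_one_le_exp (x/3)
    linarith
  have h2 : (x/3)^3 ≤ Real.exp x := by
    calc (x/3)^3 ≤ (Real.exp (x/3))^3 := pow_le_pow_left₀ (by positivity) h1 3
      _ = Real.exp x := by rw [← Real.exp_nat_mul]; congr 1; push_cast; ring
  rw [Real.exp_neg]
  rw [inv_eq_one_div, div_le_div_iff₀ (Real.exp_pos x) (by positivity)]
  nlinarith [h2]

lemma decay_poly (n k j : ℕ) (hn : 1 ≤ n) (hk : n ≤ 2*k) (hj : 1 ≤ j) :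
    (n.choose (k+j) : ℝ) ≤ (2^n / Real.sqrt n) * (216 * (n:ℝ)^3 / (j:ℝ)^6) := by
  have hd := choose_decay n k hn hk j
  have hx : (0:ℝ) < (j:ℝ)^2/(2*(n:ℝ)) := by
    have : (0:ℝ) < (j:ℝ) := by exact_mod_cast hj
    positivity
  have he : Real.exp (-((j:ℝ)^2/(2*(n:ℝ)))) ≤ 27 / ((j:ℝ)^2/(2*(n:ℝ)))^3 := exp_neg_le _ hx
  have hC : (n.choose (k+j) : ℝ) ≤ (n.choose k : ℝ) * Real.exp (-((j:ℝ)^2/(2*(n:ℝ)))) := by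
    rw [Real.exp_neg, ← div_eq_mul_inv, le_div_iff₀ (Real.exp_pos _)]
    exact hd
  have hmid : (n.choose k : ℝ) ≤ 2^n / Real.sqrt n := choose_le_real n k hn
  have hpoly : 27 / ((j:ℝ)^2/(2*(n:ℝ)))^3 = 216 * (n:ℝ)^3 / (j:ℝ)^6 := by
    have hj0 : ((j:ℝ)) ≠ 0 := by positivity
    have hn0 : ((n:ℝ)) ≠ 0 := by
      have : (0:ℝ) < n := by exact_mod_cast hn
      positivity
    field_simp
    ring
  calc (n.choose (k+j) : ℝ) ≤ (n.choose k : ℝ) * Real.exp (-((j:ℝ)^2/(2*(n:ℝ)))) := hC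
    _ ≤ (2^n / Real.sqrt n) * (27 / ((j:ℝ)^2/(2*(n:ℝ)))^3) := by
        apply mul_le_mul hmid he (Real.exp_nonneg _) (by positivity)
    _ = (2^n / Real.sqrt n) * (216 * (n:ℝ)^3 / (j:ℝ)^6) := by rw [hpoly]

lemma Dk_eq (n k : ℕ) : (Dk n k : ℤ)
    = (n.choose k : ℤ) - 3*(n.choose (k+1) : ℤ) + 3*(n.choose (k+2) : ℤ) - (n.choose (k+3) : ℤ) := by
  show Gk n k - Gk n (k+1) = _
  show (Hk n k - Hk n (k+1)) - (Hk n (k+1) - Hk n (k+1+1)) = _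
  show ((n.choose k : ℤ) - n.choose (k+1)) - ((n.choose (k+1) : ℤ) - n.choose (k+1+1))
      - (((n.choose (k+1) : ℤ) - n.choose (k+1+1)) - ((n.choose (k+1+1) : ℤ) - n.choose (k+1+1+1))) = _
  have e1 : k+1+1 = k+2 := rfl
  have e2 : k+1+1+1 = k+3 := rfl
  rw [e1, e2]
  ring

lemma Dk_real (n k : ℕ) : (Dk n k : ℝ)
    = (n.choose k : ℝ) - 3*(n.choose (k+1) : ℝ) + 3*(n.choose (k+2) : ℝ) - (n.choose (k+3) : ℝ) := by
  have := Dk_eq n k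
  have h2 := congrArg (fun z : ℤ => (z : ℝ)) this
  push_cast at h2
  exact h2

lemma Dk_formula_bound (n k s : ℕ) (hs : 2*k = n + s) (hk3 : k + 3 ≤ n) (hn : 1 ≤ n) :
    |(Dk n k : ℝ)| ≤ (n.choose k : ℝ) * (((s:ℝ)+3) * (((s:ℝ)+2)^2 + 6*(n:ℝ))) * 8 / (n:ℝ)^3 := by
  have id1 := choose_succ_real n k (by omega)
  have id2 := choose_succ_real n (k+1) (by omega)
  have id3 := choose_succ_real n (k+2) (by omega)
  push_cast at id1 id2 id3
  have hsR : (s:ℝ) = 2*(k:ℝ) - (n:ℝ) := by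
    have h := congrArg (fun z : ℕ => (z : ℝ)) hs
    push_cast at h
    linarith
  have hQ : ((k:ℝ)+1)*((k:ℝ)+2)*((k:ℝ)+3) * (Dk n k : ℝ)
      = (n.choose k : ℝ) * ((((s:ℝ)+1)*(((s:ℝ))+2)*(((s:ℝ))+3)) - 6*((n:ℝ)-(k:ℝ))*(((s:ℝ))+3)) := by
    rw [Dk_real, hsR]
    linear_combination ((-3)*((k:ℝ)+2)*((k:ℝ)+3) + 3*((k:ℝ)+3)*((n:ℝ)-(k:ℝ)-1)
        - ((n:ℝ)-(k:ℝ)-1)*((n:ℝ)-(k:ℝ)-2)) * id1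
      + (3*((k:ℝ)+1)*((k:ℝ)+3) - ((k:ℝ)+1)*((n:ℝ)-(k:ℝ)-2)) * id2
      + (-(((k:ℝ)+1)*((k:ℝ)+2))) * id3
  have hD3pos : (0:ℝ) < ((k:ℝ)+1)*((k:ℝ)+2)*((k:ℝ)+3) := by positivity
  have hb0 : (0:ℝ) ≤ (n.choose k : ℝ) := by positivity
  have hQabs : |(((s:ℝ)+1)*(((s:ℝ))+2)*(((s:ℝ))+3)) - 6*((n:ℝ)-(k:ℝ))*(((s:ℝ))+3)|
      ≤ ((s:ℝ)+3) * (((s:ℝ)+2)^2 + 6*(n:ℝ)) := by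
    have hs0 : (0:ℝ) ≤ (s:ℝ) := by positivity
    have hk0 : (0:ℝ) ≤ (k:ℝ) := by positivity
    have hnk0 : (0:ℝ) ≤ (n:ℝ)-(k:ℝ) := by
      have hkn : k ≤ n := by omega
      have : (k:ℝ) ≤ (n:ℝ) := by exact_mod_cast hkn
      linarith
    have hnkn : (n:ℝ)-(k:ℝ) ≤ (n:ℝ) := by linarith
    rw [abs_sub_comm, abs_le]
    constructor <;> nlinarith
  have habs : ((k:ℝ)+1)*((k:ℝ)+2)*((k:ℝ)+3) * |(Dk n k : ℝ)|
      ≤ (n.choose k : ℝ) * (((s:ℝ)+3) * (((s:ℝ)+2)^2 + 6*(n:ℝ))) := by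
    calc ((k:ℝ)+1)*((k:ℝ)+2)*((k:ℝ)+3) * |(Dk n k : ℝ)|
        = |((k:ℝ)+1)*((k:ℝ)+2)*((k:ℝ)+3) * (Dk n k : ℝ)| := by
          rw [abs_mul, abs_of_pos hD3pos]
      _ = |(n.choose k : ℝ)| * |(((s:ℝ)+1)*(((s:ℝ))+2)*(((s:ℝ))+3)) - 6*((n:ℝ)-(k:ℝ))*(((s:ℝ))+3)| := by
          rw [hQ, abs_mul]
      _ ≤ (n.choose k : ℝ) * (((s:ℝ)+3) * (((s:ℝ)+2)^2 + 6*(n:ℝ))) := by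
          rw [abs_of_nonneg hb0]
          exact mul_le_mul_of_nonneg_left hQabs hb0
  have hnR : (0:ℝ) < (n:ℝ) := by exact_mod_cast hn
  have hden : (n:ℝ)^3 ≤ 8*(((k:ℝ)+1)*((k:ℝ)+2)*((k:ℝ)+3)) := by
    have h2k : (n:ℝ) ≤ 2*(k:ℝ) := by
      have := congrArg (fun z : ℕ => (z:ℝ)) hs
      push_cast at this
      have hs0 : (0:ℝ) ≤ (s:ℝ) := by positivity
      linarith
    have h8 : (n:ℝ)^3 ≤ (2*(k:ℝ))^3 := pow_le_pow_left₀ hnR.le h2k 3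
    have hk0 : (0:ℝ) ≤ (k:ℝ) := by positivity
    nlinarith [h8, hk0]
  -- combine
  have h1 : |(Dk n k : ℝ)| * ((n:ℝ)^3) ≤ (n.choose k : ℝ) * (((s:ℝ)+3) * (((s:ℝ)+2)^2 + 6*(n:ℝ))) * 8 := by
    calc |(Dk n k : ℝ)| * ((n:ℝ)^3) ≤ |(Dk n k : ℝ)| * (8*(((k:ℝ)+1)*((k:ℝ)+2)*((k:ℝ)+3))) :=
          mul_le_mul_of_nonneg_left hden (abs_nonneg _)
      _ = 8 * (((k:ℝ)+1)*((k:ℝ)+2)*((k:ℝ)+3) * |(Dk n k : ℝ)|) := by ring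
      _ ≤ 8 * ((n.choose k : ℝ) * (((s:ℝ)+3) * (((s:ℝ)+2)^2 + 6*(n:ℝ)))) := by linarith [habs]
      _ = (n.choose k : ℝ) * (((s:ℝ)+3) * (((s:ℝ)+2)^2 + 6*(n:ℝ))) * 8 := by ring
  rw [le_div_iff₀ (by positivity : (0:ℝ) < (n:ℝ)^3)]
  linarith [h1]

lemma Dk_crude (n k : ℕ) (h : n ≤ 2*k) : |(Dk n k : ℝ)| ≤ 8 * (n.choose k : ℝ) := by
  rw [Dk_real]
  have h1 : (n.choose (k+1) : ℝ) ≤ (n.choose k : ℝ) := by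
    exact_mod_cast choose_anti_add n k h 1
  have h2 : (n.choose (k+2) : ℝ) ≤ (n.choose k : ℝ) := by
    exact_mod_cast choose_anti_add n k h 2
  have h3 : (n.choose (k+3) : ℝ) ≤ (n.choose k : ℝ) := by
    exact_mod_cast choose_anti_add n k h 3
  have p0 : (0:ℝ) ≤ (n.choose k : ℝ) := by positivity
  have p1 : (0:ℝ) ≤ (n.choose (k+1) : ℝ) := by positivity
  have p2 : (0:ℝ) ≤ (n.choose (k+2) : ℝ) := by positivity
  have p3 : (0:ℝ) ≤ (n.choose (k+3) : ℝ) := by positivity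
  rw [abs_le]
  constructor <;> nlinarith

lemma cube_step (x : ℝ) (hx : 2 ≤ x) : 1/x^3 ≤ 1/(2*(x-1)^2) - 1/(2*x^2) := by
  have hx1 : (0:ℝ) < x - 1 := by linarith
  have hx0 : (0:ℝ) < x := by linarith
  have heq : 1/(2*(x-1)^2) - 1/(2*x^2) = (2*x - 1)/(2*(x-1)^2*x^2) := by
    field_simp
    ring
  rw [heq, div_le_div_iff₀ (by positivity) (by positivity)]
  nlinarith [mul_nonneg (sq_nonneg x) (by linarith : (0:ℝ) ≤ 3*x - 2), sq_nonneg x]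

lemma fifth_step (x : ℝ) (hx : 2 ≤ x) : 1/x^5 ≤ 1/(4*(x-1)^4) - 1/(4*x^4) := by
  have hx1 : (0:ℝ) < x - 1 := by linarith
  have hx0 : (0:ℝ) < x := by linarith
  have heq : 1/(4*(x-1)^4) - 1/(4*x^4) = (x^4 - (x-1)^4)/(4*(x-1)^4*x^4) := by
    field_simp
  rw [heq, div_le_div_iff₀ (by positivity) (by positivity)]
  have h1 : x^4 - (x-1)^4 ≥ 4*(x-1)^3 := by nlinarith [sq_nonneg (x-1)]
  have h2 : x^5 * (4*(x-1)^3) ≥ 4*(x-1)^4*x^4 := by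
    have : (x-1)^3 * x ≥ (x-1)^3 * (x-1) :=
      mul_le_mul_of_nonneg_left (by linarith) (by positivity)
    nlinarith [pow_pos hx0 4]
  calc 1 * (4*(x-1)^4*x^4) = 4*(x-1)^4*x^4 := by ring
    _ ≤ x^5 * (4*(x-1)^3) := h2
    _ ≤ (x^4 - (x-1)^4) * x^5 := by nlinarith [pow_pos hx0 5]

lemma tail_generic (M N : ℕ) (hM : 2 ≤ M) (p : ℕ) (c : ℝ) (hc : 0 < c)
    (step : ∀ x : ℝ, 2 ≤ x → 1/x^p ≤ 1/(c*(x-1)^(p-1)) - 1/(c*x^(p-1))) :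
    ∑ j ∈ Finset.Ico M N, 1/((j:ℝ))^p ≤ 1/(c*((M:ℝ)-1)^(p-1)) := by
  rw [Finset.sum_Ico_eq_sum_range]
  set g : ℕ → ℝ := fun i => 1/(c*(((M+i : ℕ):ℝ)-1)^(p-1)) with hg
  have hM1 : (2:ℝ) ≤ (M:ℝ) := by exact_mod_cast hM
  have key : ∀ i ∈ Finset.range (N - M), 1/(((M+i : ℕ)):ℝ)^p ≤ g i - g (i+1) := by
    intro i _
    have hi0 : (0:ℝ) ≤ (i:ℝ) := by positivity
    have hx : (2:ℝ) ≤ (M:ℝ)+(i:ℝ) := by linarith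
    have hstep := step ((M:ℝ)+(i:ℝ)) hx
    have e1 : (((M+i : ℕ)):ℝ) = (M:ℝ)+(i:ℝ) := by push_cast; ring
    have e2 : (((M+(i+1) : ℕ)):ℝ) - 1 = (M:ℝ)+(i:ℝ) := by push_cast; ring
    rw [hg]
    simp only [e1, e2]
    exact hstep
  calc ∑ i ∈ Finset.range (N-M), 1/(((M+i:ℕ)):ℝ)^p
      ≤ ∑ i ∈ Finset.range (N-M), (g i - g (i+1)) := Finset.sum_le_sum key
    _ = g 0 - g (N-M) := Finset.sum_range_sub' g (N-M)
    _ ≤ g 0 := by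
        have : (0:ℝ) ≤ g (N-M) := by
          rw [hg]
          have h2 : (2:ℝ) ≤ ((M+(N-M) : ℕ):ℝ) := by
            have : M ≤ M + (N-M) := Nat.le_add_right _ _
            have h3 : (M:ℝ) ≤ ((M+(N-M) : ℕ):ℝ) := by exact_mod_cast this
            linarith
          have hy : (0:ℝ) ≤ (((M+(N-M) : ℕ):ℝ)-1) := by linarith
          exact div_nonneg (by norm_num) (mul_nonneg hc.le (pow_nonneg hy _))
        linarith
    _ = 1/(c*((M:ℝ)-1)^(p-1)) := by rw [hg]; norm_num

lemma tail_cube (M N : ℕ) (hM : 2 ≤ M) :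
    ∑ j ∈ Finset.Ico M N, 1/((j:ℝ))^3 ≤ 1/(2*((M:ℝ)-1)^2) := by
  have := tail_generic M N hM 3 2 (by norm_num) (fun x hx => by
    have := cube_step x hx
    norm_num at this ⊢
    convert this using 2 <;> norm_num)
  norm_num at this ⊢
  convert this using 2 <;> norm_num

lemma tail_fifth (M N : ℕ) (hM : 2 ≤ M) :
    ∑ j ∈ Finset.Ico M N, 1/((j:ℝ))^5 ≤ 1/(4*((M:ℝ)-1)^4) := by
  have := tail_generic M N hM 5 4 (by norm_num) (fun x hx => by
    have := fifth_step x hx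
    norm_num at this ⊢
    convert this using 2 <;> norm_num)
  norm_num at this ⊢
  convert this using 2 <;> norm_num

lemma Dsum_bound (d n k0 : ℕ) (hd : 1 ≤ d) (hn : (12*d+40)^2 ≤ n)
    (hk1 : n ≤ 2*k0) (hk2 : 2*k0 ≤ n + 4*d) :
    ∑ k ∈ Finset.range ((n+1)*d), |(Dk n (k0+k) : ℝ)|
      ≤ 100000 * (2^n / ((n:ℝ) * Real.sqrt n)) := by
  obtain ⟨t, htdef⟩ : ∃ t, t = Nat.sqrt n := ⟨_, rfl⟩
  have htt : t * t ≤ n := by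
    rw [htdef]
    have h := Nat.sqrt_le' n
    rwa [pow_two] at h
  have htlt : n < (t+1) * (t+1) := by
    rw [htdef]
    have h := Nat.lt_succ_sqrt' n
    rwa [Nat.succ_eq_add_one, pow_two] at h
  have ht40 : 12*d + 40 ≤ t := by
    rw [htdef]
    apply Nat.le_sqrt.mpr
    calc (12*d+40) * (12*d+40) = (12*d+40)^2 := by ring
      _ ≤ n := hn
  have h40t : 40 * t ≤ t * t := Nat.mul_le_mul_right t (by omega)
  have hexp : (t+1)*(t+1) = t*t + 2*t + 1 := by ring
  have hn1 : 1 ≤ n := by omega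
  obtain ⟨M, hMdef⟩ : ∃ M, M = t + 2*d + 4 := ⟨_, rfl⟩
  have hMcast : (M:ℝ) = (t:ℝ) + 2*(d:ℝ) + 4 := by rw [hMdef]; push_cast; ring
  have hMn : M + 1 ≤ n + 1 := by omega
  have hK : n+1 ≤ (n+1)*d := Nat.le_mul_of_pos_right _ (by omega)
  have hn0R : (0:ℝ) < (n:ℝ) := by exact_mod_cast hn1
  have hSn0 : (0:ℝ) < Real.sqrt n := Real.sqrt_pos.mpr hn0R
  have hts : ((t:ℝ)) ≤ Real.sqrt n := by
    rw [show ((t:ℝ)) = Real.sqrt ((t:ℝ)^2) from (Real.sqrt_sq (by positivity)).symm]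
    apply Real.sqrt_le_sqrt
    have : (t*t : ℕ) ≤ n := htt
    have h2 : ((t*t : ℕ) : ℝ) ≤ (n:ℝ) := by exact_mod_cast this
    push_cast at h2
    calc ((t:ℝ))^2 = (t:ℝ)*(t:ℝ) := pow_two _
      _ ≤ (n:ℝ) := h2
  have hMR : (n:ℝ) ≤ (M:ℝ)^2 := by
    have h0 : (t+1)*(t+1) ≤ M*M := Nat.mul_le_mul (by omega) (by omega)
    have h1 : n ≤ M * M := by omega
    have h2 : ((n:ℕ):ℝ) ≤ ((M*M : ℕ):ℝ) := by exact_mod_cast h1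
    push_cast at h2
    calc (n:ℝ) ≤ (M:ℝ)*(M:ℝ) := h2
      _ = (M:ℝ)^2 := (pow_two _).symm
  have hMRpos : (0:ℝ) < (M:ℝ) := by
    have : 1 ≤ M := by omega
    exact_mod_cast this
  have hsplit : ∑ k ∈ Finset.range ((n+1)*d), |(Dk n (k0+k) : ℝ)|
      = (∑ k ∈ Finset.range (M+1), |(Dk n (k0+k) : ℝ)|)
        + ∑ k ∈ Finset.Ico (M+1) ((n+1)*d), |(Dk n (k0+k) : ℝ)| := by
    simp only [Finset.range_eq_Ico]
    rw [← Finset.sum_Ico_consecutive _ (by omega : 0 ≤ M+1) (by omega : M+1 ≤ (n+1)*d)]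
  rw [hsplit]
  have partA : ∑ k ∈ Finset.range (M+1), |(Dk n (k0+k) : ℝ)|
      ≤ 720 * (2^n / ((n:ℝ) * Real.sqrt n)) := by
    have hterm : ∀ j ∈ Finset.range (M+1), |(Dk n (k0+j) : ℝ)|
        ≤ (2^n / Real.sqrt n) * (360 * Real.sqrt n / (n:ℝ)^2) := by
      intro j hj
      have hjM : j ≤ M := by
        have := Finset.mem_range.mp hj
        omega
      have hsj : 2*(k0+j) = n + ((2*k0 - n) + 2*j) := by omega
      have hk3 : (k0+j) + 3 ≤ n := by omega
      have hb := Dk_formula_bound n (k0+j) ((2*k0-n)+2*j) hsj hk3 hn1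
      set s : ℕ := (2*k0 - n) + 2*j with hsdef
      have hsR : ((s:ℝ)) ≤ 2*(t:ℝ) + 8*(d:ℝ) + 8 := by
        have hsN : s ≤ 2*t + 8*d + 8 := by omega
        exact_mod_cast hsN
      have hdt : 8*(d:ℝ) + 11 ≤ (t:ℝ) := by
        have : 8*d + 11 ≤ t := by omega
        exact_mod_cast this
      have hs3 : ((s:ℝ)) + 3 ≤ 3 * Real.sqrt n := by linarith
      have hs2 : (((s:ℝ)) + 2)^2 + 6*(n:ℝ) ≤ 15 * (n:ℝ) := by
        have h1 : ((s:ℝ)) + 2 ≤ 3 * Real.sqrt n := by linarith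
        have h2 : (((s:ℝ)) + 2)^2 ≤ (3*Real.sqrt n)^2 := by
          apply pow_le_pow_left₀ (by positivity) h1
        have h3 : (3*Real.sqrt n)^2 = 9 * (n:ℝ) := by
          rw [mul_pow, Real.sq_sqrt hn0R.le]
          norm_num
        linarith
      have hble : (n.choose (k0+j) : ℝ) ≤ 2^n / Real.sqrt n := choose_le_real n (k0+j) hn1
      have hs0 : (0:ℝ) ≤ (s:ℝ) := by positivity
      calc |(Dk n (k0+j) : ℝ)|
          ≤ (n.choose (k0+j) : ℝ) * (((s:ℝ)+3) * (((s:ℝ)+2)^2 + 6*(n:ℝ))) * 8 / (n:ℝ)^3 := hb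
        _ ≤ (2^n / Real.sqrt n) * ((3*Real.sqrt n) * (15*(n:ℝ))) * 8 / (n:ℝ)^3 := by
            apply div_le_div_of_nonneg_right _ (by positivity)
            apply mul_le_mul_of_nonneg_right _ (by norm_num)
            apply mul_le_mul hble _ (by positivity) (by positivity)
            apply mul_le_mul hs3 hs2 (by positivity) (by positivity)
        _ = (2^n / Real.sqrt n) * (360 * Real.sqrt n / (n:ℝ)^2) := by
            field_simp
            ring
    calc ∑ k ∈ Finset.range (M+1), |(Dk n (k0+k) : ℝ)|
        ≤ ∑ k ∈ Finset.range (M+1), (2^n / Real.sqrt n) * (360 * Real.sqrt n / (n:ℝ)^2) :=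
          Finset.sum_le_sum hterm
      _ = (M+1 : ℕ) * ((2^n / Real.sqrt n) * (360 * Real.sqrt n / (n:ℝ)^2)) := by
          rw [Finset.sum_const, Finset.card_range, nsmul_eq_mul]
      _ ≤ (2*Real.sqrt n) * ((2^n / Real.sqrt n) * (360 * Real.sqrt n / (n:ℝ)^2)) := by
          apply mul_le_mul_of_nonneg_right _ (by positivity)
          have h1 : ((M+1 : ℕ):ℝ) = (t:ℝ) + 2*(d:ℝ) + 5 := by push_cast; linarith [hMcast]
          have h2 : 2*(d:ℝ) + 5 ≤ (t:ℝ) := by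
            have : 2*d + 5 ≤ t := by omega
            exact_mod_cast this
          rw [h1]
          linarith
      _ = 720 * ((2:ℝ)^n * Real.sqrt n/(n:ℝ)^2) := by
          field_simp
          ring
      _ = 720 * (2^n / ((n:ℝ) * Real.sqrt n)) := by
          have hss : Real.sqrt n * Real.sqrt n = (n:ℝ) := Real.mul_self_sqrt hn0R.le
          have hX : (2:ℝ)^n * Real.sqrt n/(n:ℝ)^2 = 2^n/((n:ℝ)*Real.sqrt n) := by
            rw [div_eq_div_iff (by positivity) (by positivity)]
            linear_combination (2:ℝ)^n * (n:ℝ) * hss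
          rw [hX]
  have partB : ∑ k ∈ Finset.Ico (M+1) ((n+1)*d), |(Dk n (k0+k) : ℝ)|
      ≤ 90368 * (2^n / ((n:ℝ) * Real.sqrt n)) := by
    have hterm : ∀ j ∈ Finset.Ico (M+1) ((n+1)*d), |(Dk n (k0+j) : ℝ)|
        ≤ (2^n / Real.sqrt n) * (160000*(1/(j:ℝ)^3) + 41472*(n:ℝ)*(1/(j:ℝ)^5)) := by
      intro j hj
      have hjM : M + 1 ≤ j := (Finset.mem_Ico.mp hj).1
      have hj1 : 1 ≤ j := by omega
      have hjR : (0:ℝ) < (j:ℝ) := by exact_mod_cast hj1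
      have hdecay := decay_poly n k0 j hn1 hk1 hj1
      by_cases hc1 : k0 + j + 3 ≤ n
      · have hsj : 2*(k0+j) = n + ((2*k0 - n) + 2*j) := by omega
        have hb := Dk_formula_bound n (k0+j) ((2*k0-n)+2*j) hsj hc1 hn1
        set s : ℕ := (2*k0 - n) + 2*j with hsdef
        have hs4j : ((s:ℝ)) + 3 ≤ 4*(j:ℝ) := by
          have : s + 3 ≤ 4*j := by omega
          exact_mod_cast this
        have hs2b : (((s:ℝ))+2)^2 + 6*(n:ℝ) ≤ 16*(j:ℝ)^2 + 6*(n:ℝ) := by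
          have h1 : ((s:ℝ)) + 2 ≤ 4*(j:ℝ) := by linarith
          have h2 : (((s:ℝ))+2)^2 ≤ (4*(j:ℝ))^2 := pow_le_pow_left₀ (by positivity) h1 2
          have h3 : (4*(j:ℝ))^2 = 16*(j:ℝ)^2 := by ring
          linarith
        have hs0 : (0:ℝ) ≤ (s:ℝ) := by positivity
        calc |(Dk n (k0+j) : ℝ)|
            ≤ (n.choose (k0+j) : ℝ) * (((s:ℝ)+3) * (((s:ℝ)+2)^2 + 6*(n:ℝ))) * 8 / (n:ℝ)^3 := hb
          _ ≤ ((2^n / Real.sqrt n) * (216 * (n:ℝ)^3 / (j:ℝ)^6))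
              * ((4*(j:ℝ)) * (16*(j:ℝ)^2 + 6*(n:ℝ))) * 8 / (n:ℝ)^3 := by
              apply div_le_div_of_nonneg_right _ (by positivity)
              apply mul_le_mul_of_nonneg_right _ (by norm_num)
              apply mul_le_mul hdecay _ (by positivity) (by positivity)
              apply mul_le_mul hs4j hs2b (by positivity) (by positivity)
          _ = (2^n / Real.sqrt n) * (110592*(1/(j:ℝ)^3) + 41472*(n:ℝ)*(1/(j:ℝ)^5)) := by
              field_simp
              ring
          _ ≤ (2^n / Real.sqrt n) * (160000*(1/(j:ℝ)^3) + 41472*(n:ℝ)*(1/(j:ℝ)^5)) := by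
              apply mul_le_mul_of_nonneg_left _ (by positivity)
              have : (0:ℝ) ≤ 1/(j:ℝ)^3 := by positivity
              linarith
      · by_cases hc2 : k0 + j ≤ n
        · have hcrude := Dk_crude n (k0+j) (by omega)
          have hn3j : (n:ℝ) ≤ 3*(j:ℝ) := by
            have : n ≤ 3*j := by omega
            exact_mod_cast this
          have hn3 : (n:ℝ)^3 ≤ 27*(j:ℝ)^3 := by
            have h := pow_le_pow_left₀ hn0R.le hn3j 3
            calc (n:ℝ)^3 ≤ (3*(j:ℝ))^3 := h
              _ = 27*(j:ℝ)^3 := by ring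
          calc |(Dk n (k0+j) : ℝ)| ≤ 8 * (n.choose (k0+j) : ℝ) := hcrude
            _ ≤ 8 * ((2^n / Real.sqrt n) * (216 * (n:ℝ)^3 / (j:ℝ)^6)) := by
                apply mul_le_mul_of_nonneg_left hdecay (by norm_num)
            _ ≤ 8 * ((2^n / Real.sqrt n) * (216 * (27*(j:ℝ)^3) / (j:ℝ)^6)) := by
                apply mul_le_mul_of_nonneg_left _ (by norm_num)
                apply mul_le_mul_of_nonneg_left _ (by positivity)
                apply div_le_div_of_nonneg_right _ (by positivity)
                linarith
            _ = (2^n / Real.sqrt n) * (46656*(1/(j:ℝ)^3)) := by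
                field_simp
                ring
            _ ≤ (2^n / Real.sqrt n) * (160000*(1/(j:ℝ)^3) + 41472*(n:ℝ)*(1/(j:ℝ)^5)) := by
                apply mul_le_mul_of_nonneg_left _ (by positivity)
                have h1 : (0:ℝ) ≤ 1/(j:ℝ)^3 := by positivity
                have h2 : (0:ℝ) ≤ 41472*(n:ℝ)*(1/(j:ℝ)^5) := by positivity
                linarith
        · have hz : (Dk n (k0+j) : ℝ) = 0 := by
            rw [Dk_real, Nat.choose_eq_zero_of_lt (by omega), Nat.choose_eq_zero_of_lt (by omega),
              Nat.choose_eq_zero_of_lt (by omega), Nat.choose_eq_zero_of_lt (by omega)]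
            norm_num
          rw [hz, abs_zero]
          positivity
    calc ∑ k ∈ Finset.Ico (M+1) ((n+1)*d), |(Dk n (k0+k) : ℝ)|
        ≤ ∑ j ∈ Finset.Ico (M+1) ((n+1)*d),
            (2^n / Real.sqrt n) * (160000*(1/(j:ℝ)^3) + 41472*(n:ℝ)*(1/(j:ℝ)^5)) :=
          Finset.sum_le_sum hterm
      _ = (2^n / Real.sqrt n) * (160000 * (∑ j ∈ Finset.Ico (M+1) ((n+1)*d), 1/(j:ℝ)^3)
            + 41472*(n:ℝ) * (∑ j ∈ Finset.Ico (M+1) ((n+1)*d), 1/(j:ℝ)^5)) := by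
          rw [← Finset.mul_sum, Finset.sum_add_distrib, ← Finset.mul_sum, ← Finset.mul_sum]
      _ ≤ (2^n / Real.sqrt n) * (160000 * (1/(2*(M:ℝ)^2)) + 41472*(n:ℝ) * (1/(4*(M:ℝ)^4))) := by
          apply mul_le_mul_of_nonneg_left _ (by positivity)
          have hc := tail_cube (M+1) ((n+1)*d) (by omega)
          have hf := tail_fifth (M+1) ((n+1)*d) (by omega)
          have hcast : ((M+1 : ℕ):ℝ) - 1 = (M:ℝ) := by push_cast; ring
          rw [hcast] at hc hf
          have h1 : 160000 * (∑ j ∈ Finset.Ico (M+1) ((n+1)*d), 1/(j:ℝ)^3)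
              ≤ 160000 * (1/(2*(M:ℝ)^2)) := by
            apply mul_le_mul_of_nonneg_left hc (by norm_num)
          have h2 : 41472*(n:ℝ) * (∑ j ∈ Finset.Ico (M+1) ((n+1)*d), 1/(j:ℝ)^5)
              ≤ 41472*(n:ℝ) * (1/(4*(M:ℝ)^4)) := by
            apply mul_le_mul_of_nonneg_left hf (by positivity)
          linarith
      _ ≤ (2^n / Real.sqrt n) * (160000 * (1/(2*(n:ℝ))) + 41472*(n:ℝ) * (1/(4*(n:ℝ)^2))) := by
          apply mul_le_mul_of_nonneg_left _ (by positivity)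
          have hM2 : (n:ℝ) ≤ (M:ℝ)^2 := hMR
          have hM4 : (n:ℝ)^2 ≤ (M:ℝ)^4 := by nlinarith
          have h1 : 1/(2*(M:ℝ)^2) ≤ 1/(2*(n:ℝ)) := by
            apply div_le_div_of_nonneg_left (by norm_num) (by positivity) (by linarith)
          have h2 : 1/(4*(M:ℝ)^4) ≤ 1/(4*(n:ℝ)^2) := by
            apply div_le_div_of_nonneg_left (by norm_num) (by positivity) (by nlinarith)
          have h3 : (0:ℝ) ≤ 41472*(n:ℝ) := by positivity
          have h4 := mul_le_mul_of_nonneg_left h2 h3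
          have h5 : (0:ℝ) ≤ (160000:ℝ) := by norm_num
          have h6 := mul_le_mul_of_nonneg_left h1 h5
          linarith
      _ ≤ 90368 * (2^n / ((n:ℝ) * Real.sqrt n)) := by
          have heq : (2^n / Real.sqrt n) * (160000 * (1/(2*(n:ℝ))) + 41472*(n:ℝ) * (1/(4*(n:ℝ)^2)))
              = 90368 * (2^n / ((n:ℝ) * Real.sqrt n)) := by
            field_simp
            ring
          rw [heq]
  have hX0 : (0:ℝ) ≤ 2^n/((n:ℝ)*Real.sqrt n) := by positivity
  linarith [partA, partB, hX0]

lemma Hk_real (n k : ℕ) : (Hk n k : ℝ) = (n.choose k : ℝ) - (n.choose (k+1) : ℝ) := by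
  simp [Hk]

lemma adj_bound (d n r : ℕ) (hd : 1 ≤ d) (hn : (12*d+40)^2 ≤ n)
    (hr : r + 2 < 2*d) (hpar : (n + r) % 2 = 0) :
    |(cc (2*d) n r : ℝ) - (cc (2*d) n (r+2) : ℝ)|
      ≤ (100000 + 4*(d:ℝ)) * (2^n / ((n:ℝ) * Real.sqrt n)) := by
  have hn1 : 1 ≤ n := by nlinarith
  have hnd : 1600 ≤ n := by nlinarith
  have hdn : 24*d ≤ n := by nlinarith
  set k0 := (n+r)/2 with hk0def
  have hk0 : 2*k0 = n + r := by omega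
  have hk1 : n ≤ 2*k0 := by omega
  have hk2 : 2*k0 ≤ n + 4*d := by omega
  have hk0n : k0 < n := by omega
  have e1 := cc_eq d n r hd (by omega) hpar
  have e2 := cc_eq d n (r+2) hd (by omega) (by omega)
  have hk0' : (n+(r+2))/2 = k0 + 1 := by omega
  rw [hk0'] at e2
  have ediff : (cc (2*d) n r : ℤ) - (cc (2*d) n (r+2) : ℤ)
      = ∑ j ∈ Finset.range (n+1), Gk n (k0 + j*d) := by
    rw [e1, e2, ← Finset.sum_sub_distrib]
    apply Finset.sum_congr rfl
    intro j _
    show Hk n (k0 + j*d) - Hk n (k0+1 + j*d) = Hk n (k0+j*d) - Hk n ((k0+j*d)+1)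
    congr 2
    omega
  have sample := sample_bound (fun k => Gk n k) k0 d (n+1) hd
  have tele : ∑ k ∈ Finset.range ((n+1)*d), Gk n (k0+k) = Hk n k0 := by
    rw [G_telescope n k0 ((n+1)*d), Hk_eq_zero n (k0 + (n+1)*d)]
    · ring
    · have : n+1 ≤ (n+1)*d := Nat.le_mul_of_pos_right _ (by omega)
      omega
  have hDsum := Dsum_bound d n k0 hd hn hk1 hk2
  -- cast the sampling inequality to ℝ
  have hZ : |(cc (2*d) n r : ℤ) - (cc (2*d) n (r+2) : ℤ)|
      ≤ |Hk n k0| + ∑ k ∈ Finset.range ((n+1)*d), |Dk n (k0+k)| := by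
    rw [ediff]
    calc |∑ j ∈ Finset.range (n+1), Gk n (k0 + j*d)|
        ≤ |∑ k ∈ Finset.range ((n+1)*d), Gk n (k0+k)|
          + ∑ k ∈ Finset.range ((n+1)*d), |Gk n (k0+k) - Gk n (k0+k+1)| := sample
      _ = |Hk n k0| + ∑ k ∈ Finset.range ((n+1)*d), |Dk n (k0+k)| := by
          rw [tele]
          simp only [Dk]
  have hR : |(cc (2*d) n r : ℝ) - (cc (2*d) n (r+2) : ℝ)|
      ≤ |(Hk n k0 : ℝ)| + ∑ k ∈ Finset.range ((n+1)*d), |(Dk n (k0+k) : ℝ)| := by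
    have := congrArg (fun z : ℤ => (z:ℝ)) (rfl : (0:ℤ) = 0)
    have hcast : ((|(cc (2*d) n r : ℤ) - (cc (2*d) n (r+2) : ℤ)| : ℤ) : ℝ)
        ≤ ((|Hk n k0| + ∑ k ∈ Finset.range ((n+1)*d), |Dk n (k0+k)| : ℤ) : ℝ) := by
      exact_mod_cast hZ
    push_cast at hcast
    exact hcast
  -- bound |Hk n k0|
  have hn0R : (0:ℝ) < (n:ℝ) := by exact_mod_cast hn1
  have hSn0 : (0:ℝ) < Real.sqrt n := Real.sqrt_pos.mpr hn0R
  have hHbound : |(Hk n k0 : ℝ)| ≤ 4*(d:ℝ) * (2^n / ((n:ℝ)*Real.sqrt n)) := by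
    have id1 := choose_succ_real n k0 hk0n
    have hk0R : 2*(k0:ℝ) = (n:ℝ) + (r:ℝ) := by exact_mod_cast hk0
    have hHkid : ((k0:ℝ)+1) * (Hk n k0 : ℝ) = ((r:ℝ)+1) * (n.choose k0 : ℝ) := by
      rw [Hk_real]
      linear_combination (-1) * id1 + (n.choose k0 : ℝ) * hk0R
    have hk0pos : (0:ℝ) < (k0:ℝ)+1 := by positivity
    have hHeq : (Hk n k0 : ℝ) = ((r:ℝ)+1) * (n.choose k0 : ℝ) / ((k0:ℝ)+1) := by
      field_simp
      linarith [hHkid]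
    rw [hHeq, abs_of_nonneg (by positivity)]
    have hb0 : (n.choose k0 : ℝ) ≤ 2^n / Real.sqrt n := choose_le_real n k0 hn1
    have hr1 : ((r:ℝ)+1) ≤ 2*(d:ℝ) := by
      have : r + 1 ≤ 2*d := by omega
      exact_mod_cast this
    have hkk : (n:ℝ) ≤ 2*((k0:ℝ)+1) := by
      have : n ≤ 2*(k0+1) := by omega
      exact_mod_cast this
    rw [div_le_iff₀ hk0pos]
    have h1 : ((r:ℝ)+1) * (n.choose k0 : ℝ) ≤ 2*(d:ℝ) * (2^n / Real.sqrt n) := by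
      apply mul_le_mul hr1 hb0 (by positivity) (by positivity)
    calc ((r:ℝ)+1) * (n.choose k0 : ℝ) ≤ 2*(d:ℝ) * (2^n / Real.sqrt n) := h1
      _ ≤ 4*(d:ℝ) * (2^n / ((n:ℝ)*Real.sqrt n)) * ((k0:ℝ)+1) := by
          have hd0 : (0:ℝ) < (d:ℝ) := by exact_mod_cast hd
          have key : 2*(d:ℝ) * (2^n / Real.sqrt n) * (n:ℝ)
              ≤ 4*(d:ℝ) * (2^n / ((n:ℝ)*Real.sqrt n)) * ((k0:ℝ)+1) * (n:ℝ) := by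
            have e3 : 4*(d:ℝ) * (2^n / ((n:ℝ)*Real.sqrt n)) * (n:ℝ) = 4*(d:ℝ) * (2^n/Real.sqrt n) := by
              field_simp
            calc 2*(d:ℝ) * (2^n / Real.sqrt n) * (n:ℝ)
                ≤ (4*(d:ℝ) * (2^n/Real.sqrt n)) * ((k0:ℝ)+1) := by
                  have hpw : (0:ℝ) < 2^n / Real.sqrt n := by positivity
                  have h5 : 2*(d:ℝ)*(2^n/Real.sqrt n)*(n:ℝ)
                      ≤ 2*(d:ℝ)*(2^n/Real.sqrt n)*(2*((k0:ℝ)+1)) :=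
                    mul_le_mul_of_nonneg_left hkk (by positivity)
                  linarith [h5]
              _ = 4*(d:ℝ) * (2^n / ((n:ℝ)*Real.sqrt n)) * ((k0:ℝ)+1) * (n:ℝ) := by
                  field_simp
          exact le_of_mul_le_mul_right key hn0R
  calc |(cc (2*d) n r : ℝ) - (cc (2*d) n (r+2) : ℝ)|
      ≤ |(Hk n k0 : ℝ)| + ∑ k ∈ Finset.range ((n+1)*d), |(Dk n (k0+k) : ℝ)| := hR
    _ ≤ 4*(d:ℝ) * (2^n / ((n:ℝ)*Real.sqrt n)) + 100000 * (2^n / ((n:ℝ)*Real.sqrt n)) := by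
        exact add_le_add hHbound hDsum
    _ = (100000 + 4*(d:ℝ)) * (2^n / ((n:ℝ)*Real.sqrt n)) := by ring

section FinalAssembly

lemma chain_bound (d n : ℕ) (hd : 1 ≤ d) (hn : (12*d+40)^2 ≤ n) :
    ∀ i, i < d → |(cc (2*d) n (n % 2) : ℝ) - (cc (2*d) n (n % 2 + 2*i) : ℝ)|
      ≤ (i:ℝ) * ((100000 + 4*(d:ℝ)) * (2^n / ((n:ℝ) * Real.sqrt n))) := by
  intro i
  induction i with
  | zero => simp
  | succ i ih =>
    intro hi
    have hstep := adj_bound d n (n % 2 + 2*i) hd hn (by omega) (by omega)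
    have hih := ih (by omega)
    have hre : n % 2 + 2*(i+1) = (n % 2 + 2*i) + 2 := by ring
    rw [hre]
    calc |(cc (2*d) n (n % 2) : ℝ) - (cc (2*d) n ((n % 2 + 2*i) + 2) : ℝ)|
        ≤ |(cc (2*d) n (n % 2) : ℝ) - (cc (2*d) n (n % 2 + 2*i) : ℝ)|
          + |(cc (2*d) n (n % 2 + 2*i) : ℝ) - (cc (2*d) n ((n % 2 + 2*i) + 2) : ℝ)| :=
          abs_sub_le _ _ _
      _ ≤ (i:ℝ) * ((100000 + 4*(d:ℝ)) * (2^n / ((n:ℝ) * Real.sqrt n)))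
          + (100000 + 4*(d:ℝ)) * (2^n / ((n:ℝ) * Real.sqrt n)) := add_le_add hih hstep
      _ = ((i+1 : ℕ):ℝ) * ((100000 + 4*(d:ℝ)) * (2^n / ((n:ℝ) * Real.sqrt n))) := by
          push_cast
          ring

lemma main_bound (d n r : ℕ) (hd : 1 ≤ d) (hn : (12*d+40)^2 ≤ n) (hr : r < 2*d)
    (hpar : (n+r) % 2 = 0) :
    |(cc (2*d) n r : ℝ) - (aSum n : ℝ)/(d:ℝ)|
      ≤ 2*(d:ℝ) * ((100000 + 4*(d:ℝ)) * (2^n / ((n:ℝ) * Real.sqrt n))) := by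
  have hX0 : (0:ℝ) ≤ (100000 + 4*(d:ℝ)) * (2^n / ((n:ℝ) * Real.sqrt n)) := by positivity
  obtain ⟨ir, hirlt, hireq⟩ : ∃ i, i < d ∧ r = n % 2 + 2*i := ⟨(r - n % 2)/2, by omega, by omega⟩
  have hch := chain_bound d n hd hn
  have hdR : (0:ℝ) < (d:ℝ) := by exact_mod_cast hd
  have hpair : ∀ i, i < d → |(cc (2*d) n r : ℝ) - (cc (2*d) n (n % 2 + 2*i) : ℝ)|
      ≤ 2*(d:ℝ) * ((100000 + 4*(d:ℝ)) * (2^n / ((n:ℝ) * Real.sqrt n))) := by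
    intro i hi
    have h1 := hch ir hirlt
    have h2 := hch i hi
    have hd1 : (ir:ℝ) ≤ (d:ℝ) := by exact_mod_cast le_of_lt hirlt
    have hd2 : (i:ℝ) ≤ (d:ℝ) := by exact_mod_cast le_of_lt hi
    calc |(cc (2*d) n r : ℝ) - (cc (2*d) n (n % 2 + 2*i) : ℝ)|
        ≤ |(cc (2*d) n (n % 2) : ℝ) - (cc (2*d) n r : ℝ)|
          + |(cc (2*d) n (n % 2) : ℝ) - (cc (2*d) n (n % 2 + 2*i) : ℝ)| := by
          rw [abs_sub_comm ((cc (2*d) n (n % 2) : ℝ)) ((cc (2*d) n r : ℝ))]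
          exact abs_sub_le _ _ _
      _ ≤ (ir:ℝ) * ((100000 + 4*(d:ℝ)) * (2^n / ((n:ℝ) * Real.sqrt n)))
          + (i:ℝ) * ((100000 + 4*(d:ℝ)) * (2^n / ((n:ℝ) * Real.sqrt n))) := by
          apply add_le_add _ h2
          rw [hireq]
          exact h1
      _ ≤ 2*(d:ℝ) * ((100000 + 4*(d:ℝ)) * (2^n / ((n:ℝ) * Real.sqrt n))) := by
          nlinarith [hX0, hd1, hd2]
  have hsum : (aSum n : ℝ) = ∑ i ∈ Finset.range d, (cc (2*d) n (n % 2 + 2*i) : ℝ) := by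
    have := sum_cc d n hd
    exact_mod_cast (congrArg (fun z : ℕ => (z:ℝ)) this).symm
  have hkey : |(d:ℝ) * (cc (2*d) n r : ℝ) - (aSum n : ℝ)|
      ≤ (d:ℝ) * (2*(d:ℝ) * ((100000 + 4*(d:ℝ)) * (2^n / ((n:ℝ) * Real.sqrt n)))) := by
    rw [hsum]
    have e1 : (d:ℝ) * (cc (2*d) n r : ℝ) - ∑ i ∈ Finset.range d, (cc (2*d) n (n % 2 + 2*i) : ℝ)
        = ∑ i ∈ Finset.range d, ((cc (2*d) n r : ℝ) - (cc (2*d) n (n % 2 + 2*i) : ℝ)) := by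
      rw [Finset.sum_sub_distrib, Finset.sum_const, Finset.card_range, nsmul_eq_mul]
    rw [e1]
    calc |∑ i ∈ Finset.range d, ((cc (2*d) n r : ℝ) - (cc (2*d) n (n % 2 + 2*i) : ℝ))|
        ≤ ∑ i ∈ Finset.range d, |(cc (2*d) n r : ℝ) - (cc (2*d) n (n % 2 + 2*i) : ℝ)| :=
          Finset.abs_sum_le_sum_abs _ _
      _ ≤ ∑ i ∈ Finset.range d, (2*(d:ℝ) * ((100000 + 4*(d:ℝ)) * (2^n / ((n:ℝ) * Real.sqrt n)))) :=
          Finset.sum_le_sum (fun i hi => hpair i (Finset.mem_range.mp hi))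
      _ = (d:ℝ) * (2*(d:ℝ) * ((100000 + 4*(d:ℝ)) * (2^n / ((n:ℝ) * Real.sqrt n)))) := by
          rw [Finset.sum_const, Finset.card_range, nsmul_eq_mul]
  have hfin : (d:ℝ) * |(cc (2*d) n r : ℝ) - (aSum n : ℝ)/(d:ℝ)|
      ≤ (d:ℝ) * (2*(d:ℝ) * ((100000 + 4*(d:ℝ)) * (2^n / ((n:ℝ) * Real.sqrt n)))) := by
    have e2 : (d:ℝ) * |(cc (2*d) n r : ℝ) - (aSum n : ℝ)/(d:ℝ)|
        = |(d:ℝ) * (cc (2*d) n r : ℝ) - (aSum n : ℝ)| := by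
      rw [← abs_of_pos hdR, ← abs_mul]
      congr 1
      field_simp
      rw [abs_of_pos hdR]
    rw [e2]
    exact hkey
  exact le_of_mul_le_mul_left hfin hdR


/-- For even `ℓ ≥ 2` and `0 ≤ r < ℓ`: for all `n ≥ 1` with `r ≡ n (mod 2)`,
`|c(n,r) − 2·a(n)/ℓ| ≤ C·n^{-3/2}·2^n`. -/
theorem stmt5 (ℓ : ℕ) (hℓ : 2 ≤ ℓ) (heven : Even ℓ) (r : ℕ) (hr : r < ℓ) :
    ∃ C : ℝ, 0 < C ∧ ∀ n : ℕ, 1 ≤ n → r % 2 = n % 2 →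
      |(cc ℓ n r : ℝ) - 2 * (aSum n : ℝ) / ℓ| ≤ C * (n : ℝ) ^ (-(3 : ℝ)/2) * 2 ^ n := by
  obtain ⟨d, hdeq⟩ := heven
  have hdeq2 : ℓ = 2*d := by omega
  have hd : 1 ≤ d := by omega
  subst hdeq2
  refine ⟨2*(d:ℝ) * (100000 + 4*(d:ℝ)) + 2*((12*(d:ℝ)+40))^4 + 1, by positivity, ?_⟩
  intro n hn1 hpar
  have hn0R : (0:ℝ) < (n:ℝ) := by exact_mod_cast hn1
  have hSn0 : (0:ℝ) < Real.sqrt n := Real.sqrt_pos.mpr hn0R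
  have hparity : (n + r) % 2 = 0 := by omega
  have hell : ((2*d : ℕ):ℝ) = 2*(d:ℝ) := by push_cast; ring
  have havg : 2 * (aSum n : ℝ) / ((2*d : ℕ):ℝ) = (aSum n : ℝ)/(d:ℝ) := by
    rw [hell]
    have : (d:ℝ) ≠ 0 := by positivity
    field_simp
  rw [havg]
  have hrpow : (n:ℝ) ^ (-(3:ℝ)/2) = 1 / ((n:ℝ) * Real.sqrt n) := by
    rw [Real.sqrt_eq_rpow, show (-(3:ℝ)/2) = -(1 + 1/2) by norm_num, Real.rpow_neg hn0R.le,
      Real.rpow_add hn0R, Real.rpow_one]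
    simp
  by_cases hbig : (12*d+40)^2 ≤ n
  · have hmain := main_bound d n r hd hbig hr hparity
    have hXeq : 2^n / ((n:ℝ) * Real.sqrt n) = (n:ℝ) ^ (-(3:ℝ)/2) * 2^n := by
      rw [hrpow]
      ring
    calc |(cc (2*d) n r : ℝ) - (aSum n : ℝ)/(d:ℝ)|
        ≤ 2*(d:ℝ) * ((100000 + 4*(d:ℝ)) * (2^n / ((n:ℝ) * Real.sqrt n))) := hmain
      _ = (2*(d:ℝ) * (100000 + 4*(d:ℝ))) * ((n:ℝ) ^ (-(3:ℝ)/2) * 2^n) := by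
          rw [hXeq]
          ring
      _ ≤ (2*(d:ℝ) * (100000 + 4*(d:ℝ)) + 2*((12*(d:ℝ)+40))^4 + 1) * ((n:ℝ) ^ (-(3:ℝ)/2) * 2^n) := by
          apply mul_le_mul_of_nonneg_right _ (by positivity)
          have : (0:ℝ) < 2*((12*(d:ℝ)+40))^4 + 1 := by positivity
          linarith
      _ = (2*(d:ℝ) * (100000 + 4*(d:ℝ)) + 2*((12*(d:ℝ)+40))^4 + 1) * (n:ℝ) ^ (-(3:ℝ)/2) * 2^n := by
          ring
  · -- small n
    push_neg at hbig
    have hccle : (cc (2*d) n r : ℝ) ≤ (aSum n : ℝ) := by exact_mod_cast cc_le (2*d) n r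
    have hcc0 : (0:ℝ) ≤ (cc (2*d) n r : ℝ) := by positivity
    have haSle : (aSum n : ℝ) ≤ 2^n := by exact_mod_cast aSum_le n
    have haS0 : (0:ℝ) ≤ (aSum n : ℝ) := by positivity
    have havgle : (aSum n : ℝ)/(d:ℝ) ≤ (aSum n : ℝ) := by
      have hd1 : (1:ℝ) ≤ (d:ℝ) := by exact_mod_cast hd
      rw [div_le_iff₀ (by positivity)]
      nlinarith [haS0]
    have havg0 : (0:ℝ) ≤ (aSum n : ℝ)/(d:ℝ) := by positivity
    have hlhs : |(cc (2*d) n r : ℝ) - (aSum n : ℝ)/(d:ℝ)| ≤ 2 * 2^n := by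
      rw [abs_le]
      constructor <;> nlinarith
    -- n^(-3/2) ≥ n^(-2) = 1/n^2
    have hcompare : ((n:ℝ))^(-(2:ℝ)) ≤ (n:ℝ) ^ (-(3:ℝ)/2) := by
      apply Real.rpow_le_rpow_of_exponent_le (by exact_mod_cast hn1)
      norm_num
    have hninv : ((n:ℝ))^(-(2:ℝ)) = 1/(n:ℝ)^2 := by
      rw [Real.rpow_neg hn0R.le, show ((2:ℝ)) = ((2:ℕ):ℝ) by norm_num, Real.rpow_natCast]
      simp
    have hnsq : (n:ℝ)^2 ≤ ((12*(d:ℝ)+40))^4 := by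
      have h1 : (n:ℝ) ≤ ((12*(d:ℝ)+40))^2 := by
        have : (n:ℝ) < (((12*d+40)^2 : ℕ):ℝ) := by exact_mod_cast hbig
        push_cast at this
        linarith
      calc (n:ℝ)^2 ≤ (((12*(d:ℝ)+40))^2)^2 := pow_le_pow_left₀ hn0R.le h1 2
        _ = ((12*(d:ℝ)+40))^4 := by ring
    have key : 2 * 2^n ≤ (2*(d:ℝ) * (100000 + 4*(d:ℝ)) + 2*((12*(d:ℝ)+40))^4 + 1)
        * (n:ℝ) ^ (-(3:ℝ)/2) * 2^n := by
      have h2 : (2:ℝ) ≤ (2*(d:ℝ) * (100000 + 4*(d:ℝ)) + 2*((12*(d:ℝ)+40))^4 + 1)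
          * (n:ℝ) ^ (-(3:ℝ)/2) := by
        calc (2:ℝ) = (2*(n:ℝ)^2) * (1/(n:ℝ)^2) := by field_simp
          _ ≤ (2*((12*(d:ℝ)+40))^4) * (1/(n:ℝ)^2) := by
              apply mul_le_mul_of_nonneg_right _ (by positivity)
              linarith
          _ = (2*((12*(d:ℝ)+40))^4) * ((n:ℝ))^(-(2:ℝ)) := by rw [hninv]
          _ ≤ (2*(d:ℝ) * (100000 + 4*(d:ℝ)) + 2*((12*(d:ℝ)+40))^4 + 1) * (n:ℝ) ^ (-(3:ℝ)/2) := by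
              apply mul_le_mul _ hcompare (by positivity) (by positivity)
              have h3 : (0:ℝ) < 2*(d:ℝ) * (100000 + 4*(d:ℝ)) + 1 := by positivity
              linarith
      calc 2 * (2:ℝ)^n = 2 * 2^n := rfl
        _ ≤ ((2*(d:ℝ) * (100000 + 4*(d:ℝ)) + 2*((12*(d:ℝ)+40))^4 + 1) * (n:ℝ) ^ (-(3:ℝ)/2)) * 2^n := by
            apply mul_le_mul_of_nonneg_right h2 (by positivity)
        _ = _ := by ring
    linarith [hlhs, key]
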